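/- Let (X, f) be a dynamical system on a connected compact uniform space. If f is topologically chain transitive, then it is topologically chain mixing. -/
import Mathlib


open Set Filter Function

variable {X : Type*}

/-- An `E`-chain of length `n` from `x` to `y` for the map `f`. -/
def ChainFrom (f : X → X) (E : Set (X × X)) (n : ℕ) (x y : X) : Prop :=
  ∃ c : ℕ → X, c 0 = x ∧ c n = y ∧ ∀ i < n, (f (c i), c (i + 1)) ∈ E

/-- Topological chain transitivity on a uniform space. -/
def ChainTransitive [UniformSpace X] (f : X → X) : Prop :=
  ∀ E ∈ uniformity X, ∀ x y : X, ∃ n ≥ 1, ChainFrom f E n x y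

/-- Lengths of `E`-chains from `x` to itself (loops). -/
def LoopLengths (f : X → X) (E : Set (X × X)) (x : X) : Set ℕ :=
  {n | 1 ≤ n ∧ ChainFrom f E n x x}

/-- `g` is the greatest common divisor of the set `S` of naturals. -/
def IsGcdOfSet (g : ℕ) (S : Set ℕ) : Prop :=
  (∀ n ∈ S, g ∣ n) ∧ ∀ d : ℕ, (∀ n ∈ S, d ∣ n) → d ∣ g

/-- The relation `x ∼_E y`: some `E`-chain from `x` to `y` has length a multiple of `ι`. -/
def SimE (f : X → X) (E : Set (X × X)) (ι : ℕ) (x y : X) : Prop :=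
  ∃ n, ι ∣ n ∧ ChainFrom f E n x y

/-- Topological shadowing property on a uniform space. -/
def Shadowing [UniformSpace X] (f : X → X) : Prop :=
  ∀ E ∈ uniformity X, ∃ D ∈ uniformity X,
    ∀ x : ℕ → X, (∀ i, (f (x i), x (i + 1)) ∈ D) →
      ∃ y, ∀ n, (f^[n] y, x n) ∈ E

/-- Topological chain mixing on a uniform space. -/
def ChainMixing [UniformSpace X] (f : X → X) : Prop :=
  ∀ D ∈ uniformity X, ∀ x y : X, ∃ N ≥ 1, ∀ n ≥ N, ChainFrom f D n x y

/-- A non-wandering point of `f`. -/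
def NonWandering [TopologicalSpace X] (f : X → X) (x : X) : Prop :=
  ∀ V ∈ nhds x, ∃ n ≥ 1, (V ∩ f^[n] ⁻¹' V).Nonempty

/-- Topological transitivity. -/
def TopTransitive [TopologicalSpace X] (f : X → X) : Prop :=
  ∀ U V : Set X, IsOpen U → IsOpen V → U.Nonempty → V.Nonempty →
    ∃ n : ℕ, (U ∩ f^[n] ⁻¹' V).Nonempty

/-- A syndetic set of natural numbers (bounded gaps). -/
def Syndetic (A : Set ℕ) : Prop :=
  ∃ k : ℕ, ∀ n : ℕ, ∃ m, n ≤ m ∧ m ≤ n + k ∧ m ∈ A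

/-- A minimal (almost periodic) point of `f`. -/
def MinimalPt [TopologicalSpace X] (f : X → X) (y : X) : Prop :=
  ∀ V ∈ nhds y, Syndetic {n : ℕ | f^[n] y ∈ V}

/-- Equicontinuity of a dynamical system on a uniform space. -/
def Equicont [UniformSpace X] (f : X → X) : Prop :=
  ∀ E ∈ uniformity X, ∃ D ∈ uniformity X, ∀ n : ℕ, ∀ p ∈ D, (f^[n] p.1, f^[n] p.2) ∈ E

lemma chainFrom_mono {f : X → X} {E E' : Set (X × X)} (h : E ⊆ E') {n : ℕ} {x y : X}
    (hc : ChainFrom f E n x y) : ChainFrom f E' n x y := by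
  obtain ⟨c, h0, hn, hs⟩ := hc
  exact ⟨c, h0, hn, fun i hi => h (hs i hi)⟩

lemma chainFrom_trans {f : X → X} {E : Set (X × X)} {m n : ℕ} {x y z : X}
    (h1 : ChainFrom f E m x y) (h2 : ChainFrom f E n y z) :
    ChainFrom f E (m + n) x z := by
  obtain ⟨c, hc0, hcm, hcs⟩ := h1
  obtain ⟨d, hd0, hdn, hds⟩ := h2
  refine ⟨fun i => if i ≤ m then c i else d (i - m), ?_, ?_, ?_⟩
  · simp [hc0]
  · rcases Nat.eq_zero_or_pos n with rfl | hnpos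
    · simp [hcm, hd0 ▸ hdn]
    · have h1 : ¬ m + n ≤ m := by omega
      simp only [if_neg h1, Nat.add_sub_cancel_left, hdn]
  · intro i hi
    by_cases him : i < m
    · have e1 : i ≤ m := him.le
      have e2 : i + 1 ≤ m := him
      simp only [if_pos e1, if_pos e2]
      exact hcs i him
    · push_neg at him
      have e1 : (if i ≤ m then c i else d (i - m)) = d (i - m) := by
        rcases eq_or_lt_of_le him with rfl | h
        · simp [hcm, hd0]
      
        · have : ¬ i ≤ m := by omega
          simp [this]
      have e2 : ¬ i + 1 ≤ m := by omega
      have e3 : i + 1 - m = (i - m) + 1 := by omega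
      simp only [e1, if_neg e2, e3]
      exact hds (i - m) (by omega)

lemma loopLengths_add {f : X → X} {E : Set (X × X)} {x : X} {a b : ℕ}
    (ha : a ∈ LoopLengths f E x) (hb : b ∈ LoopLengths f E x) :
    a + b ∈ LoopLengths f E x :=
  ⟨le_trans ha.1 (Nat.le_add_right a b), chainFrom_trans ha.2 hb.2⟩

lemma loopLengths_mul {f : X → X} {E : Set (X × X)} {x : X} {a t : ℕ}
    (ht : 1 ≤ t) (ha : a ∈ LoopLengths f E x) : t * a ∈ LoopLengths f E x := by
  induction t with
  | zero => omega
  | succ s ih =>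
      rcases Nat.eq_zero_or_pos s with rfl | hs
      · simpa using ha
      · have := loopLengths_add (ih hs) ha
        simpa [Nat.succ_mul] using this

/-- For an add-closed set `L` of positive naturals, the smallest positive difference `g`
of elements of `L ∪ {0}` divides every element of `L`, and is realized as a difference. -/
lemma exists_min_diff (L : Set ℕ) (hL1 : ∀ n ∈ L, 1 ≤ n)
    (hadd : ∀ a ∈ L, ∀ b ∈ L, a + b ∈ L) (hne : L.Nonempty) :
    ∃ g, 0 < g ∧ (∀ n ∈ L, g ∣ n) ∧
      ∃ p q, (p = 0 ∨ p ∈ L) ∧ (q = 0 ∨ q ∈ L) ∧ p = q + g := by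
  classical
  set M : Set ℕ := {m | m = 0 ∨ m ∈ L} with hM
  have hMadd : ∀ a ∈ M, ∀ b ∈ M, a + b ∈ M := by
    rintro a (rfl | ha) b (rfl | hb)
    · exact Or.inl rfl
    · exact Or.inr (by simpa using hb)
    · exact Or.inr (by simpa using ha)
    · exact Or.inr (hadd a ha b hb)
  set S : Set ℕ := {d | 0 < d ∧ ∃ p q, p ∈ M ∧ q ∈ M ∧ p = q + d} with hS
  have hSne : S.Nonempty := by
    obtain ⟨n, hn⟩ := hne
    exact ⟨n, hL1 n hn, n, 0, Or.inr hn, Or.inl rfl, (zero_add n).symm⟩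
  set g : ℕ := sInf S with hg
  have hgS : g ∈ S := Nat.sInf_mem hSne
  have hgpos : 0 < g := hgS.1
  have hdvd : ∀ d ∈ S, g ∣ d := by
    intro d
    induction d using Nat.strong_induction_on with
    | _ d ih =>
      intro hd
      have hge : g ≤ d := Nat.sInf_le hd
      rcases eq_or_lt_of_le hge with rfl | hlt
      · exact dvd_refl g
      · have hdg : d - g ∈ S := by
          obtain ⟨p, q, hp, hq, hpq⟩ := hd.2
          obtain ⟨p', q', hp', hq', hpq'⟩ := hgS.2
          refine ⟨by omega, p + q', q + p', hMadd p hp q' hq', hMadd q hq p' hp', by omega⟩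
        obtain ⟨t, ht⟩ := ih (d - g) (by omega) hdg
        exact ⟨t + 1, by rw [Nat.mul_add, Nat.mul_one, ← ht]; omega⟩
  refine ⟨g, hgpos, ?_, ?_⟩
  · intro n hn
    exact hdvd n ⟨hL1 n hn, n, 0, Or.inr hn, Or.inl rfl, (zero_add n).symm⟩
  · obtain ⟨p, q, hp, hq, hpq⟩ := hgS.2
    exact ⟨p, q, hp, hq, hpq⟩

theorem chain_transitive_imp_chain_mixing_of_connected [UniformSpace X]
    [CompactSpace X] [ConnectedSpace X]
    (f : X → X) (hf : UniformContinuous f) (ht : ChainTransitive f) :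
    ChainMixing f := by
  intro D hD x y
  obtain ⟨D', ⟨hD'mem, hD'open⟩, hD'sub⟩ := (uniformity_hasBasis_open.mem_iff).mp hD
  set L : Set ℕ := LoopLengths f D' x with hLdef
  have hL1 : ∀ n ∈ L, 1 ≤ n := fun n hn => hn.1
  have hadd : ∀ a ∈ L, ∀ b ∈ L, a + b ∈ L := fun a ha b hb => loopLengths_add ha hb
  have hne : L.Nonempty := by
    obtain ⟨n, hn1, hc⟩ := ht D' hD'mem x x
    exact ⟨n, hn1, hc⟩
  obtain ⟨g, hgpos, hgdvd, p, q, hp, hq, hpq⟩ := exists_min_diff L hL1 hadd hne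
  -- Step 1: connectedness forces g = 1
  have hg1 : g = 1 := by
    by_contra hgne
    have hg2 : 2 ≤ g := by omega
    set C : ℕ → Set X := fun k => {z | ∃ n, 1 ≤ n ∧ n % g = k ∧ ChainFrom f D' n x z}
      with hCdef
    have hCopen : ∀ k, IsOpen (C k) := by
      intro k
      rw [isOpen_iff_forall_mem_open]
      rintro z ⟨n, hn1, hnk, c, hc0, hcn, hcs⟩
      refine ⟨{w | (f (c (n - 1)), w) ∈ D'}, ?_, ?_, ?_⟩
      · intro w hw
        refine ⟨n, hn1, hnk, fun i => if i = n then w else c i, ?_, ?_, ?_⟩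
        · have h0 : (0 : ℕ) ≠ n := by omega
          simp [h0, hc0]
        · simp
        · intro i hi
          have hin : i ≠ n := by omega
          simp only [if_neg hin]
          by_cases hii : i + 1 = n
          · have hieq : i = n - 1 := by omega
            simp only [if_pos hii]
            rw [hieq]
            exact hw
          · simp only [if_neg hii]
            exact hcs i hi
      · exact hD'open.preimage (Continuous.prodMk_right _)
      · have := hcs (n - 1) (by omega)
        have e : n - 1 + 1 = n := by omega
        rw [e, hcn] at this
        exact this
    have hdisj : ∀ k j z, z ∈ C k → z ∈ C j → k = j := by
      rintro k j z ⟨n, hn1, hnk, hcn⟩ ⟨n', hn'1, hn'k, hcn'⟩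
      obtain ⟨m, hm1, hmc⟩ := ht D' hD'mem z x
      have hl1 : n + m ∈ L := ⟨by omega, chainFrom_trans hcn hmc⟩
      have hl2 : n' + m ∈ L := ⟨by omega, chainFrom_trans hcn' hmc⟩
      have hmod : n ≡ n' [MOD g] := by
        have e1 : n + m ≡ 0 [MOD g] := (Nat.modEq_zero_iff_dvd).mpr (hgdvd _ hl1)
        have e2 : n' + m ≡ 0 [MOD g] := (Nat.modEq_zero_iff_dvd).mpr (hgdvd _ hl2)
        exact Nat.ModEq.add_right_cancel (Nat.ModEq.refl m) (e1.trans e2.symm)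
      rw [← hnk, ← hn'k]
      exact hmod
    have hclopen : IsClopen (C 0) := by
      refine ⟨?_, hCopen 0⟩
      have hcompl : (C 0)ᶜ = ⋃ k ∈ {k : ℕ | k ≠ 0}, C k := by
        ext z
        simp only [mem_compl_iff, mem_iUnion, mem_setOf_eq, exists_prop]
        constructor
        · intro hz
          obtain ⟨n, hn1, hcn⟩ := ht D' hD'mem x z
          refine ⟨n % g, ?_, n, hn1, rfl, hcn⟩
          intro h0
          exact hz ⟨n, hn1, h0, hcn⟩
        · rintro ⟨k, hk0, hzk⟩ hz0
          exact hk0 (hdisj k 0 z hzk hz0)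
      rw [← isOpen_compl_iff, hcompl]
      exact isOpen_biUnion fun k _ => hCopen k
    have hxC0 : x ∈ C 0 := by
      obtain ⟨n, hn1, hc⟩ := ht D' hD'mem x x
      obtain ⟨t, htt⟩ := hgdvd n ⟨hn1, hc⟩
      exact ⟨n, hn1, by rw [htt]; exact Nat.mul_mod_right g t, hc⟩
    have hC0univ : C 0 = univ := by
      rcases isClopen_iff.mp hclopen with h | h
      · exact absurd (h ▸ hxC0) (notMem_empty x)
      · exact h
    have hfxC1 : f x ∈ C (1 % g) := by
      refine ⟨1, le_refl 1, rfl, fun i => if i = 0 then x else f x, by simp, by simp, ?_⟩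
      intro i hi
      have : i = 0 := by omega
      subst this
      simp only [if_pos rfl, if_neg (by omega : (1 : ℕ) ≠ 0)]
      exact refl_mem_uniformity hD'mem
    have hfxC0 : f x ∈ C 0 := hC0univ ▸ mem_univ (f x)
    have : 1 % g = 0 := hdisj _ _ _ hfxC1 hfxC0
    rw [Nat.mod_eq_of_lt (by omega)] at this
    omega
  -- Step 2: loops of consecutive lengths k and k + 1
  subst hg1
  have hkex : ∃ k, 1 ≤ k ∧ k ∈ L ∧ k + 1 ∈ L := by
    rcases hq with rfl | hqL
    · have hp1 : p ∈ L := by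
        rcases hp with rfl | h
        · omega
        · exact h
      rw [zero_add] at hpq
      subst hpq
      exact ⟨1, le_refl 1, hp1, hadd 1 hp1 1 hp1⟩
    · have hpL : p ∈ L := by
        rcases hp with rfl | h
        · omega
        · exact h
      exact ⟨q, hL1 q hqL, hqL, hpq ▸ hpL⟩
  obtain ⟨k, hk1, hkL, hk1L⟩ := hkex
  -- Step 3: all n ≥ k * k are loop lengths
  have hlarge : ∀ n, k * k ≤ n → n ∈ L := by
    intro n hn
    have hkpos : 0 < k := hk1
    have hr : n % k < k := Nat.mod_lt _ hkpos
    have hqk : k ≤ n / k := (Nat.le_div_iff_mul_le hkpos).mpr hn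
    have hnd : n = k * (n / k) + n % k := (Nat.div_add_mod n k).symm
    have hrq : n % k ≤ n / k := le_trans hr.le hqk
    obtain ⟨s, hs⟩ := Nat.exists_eq_add_of_le hrq
    rcases Nat.eq_zero_or_pos (n % k) with hr0 | hrpos
    · have hd := loopLengths_mul (t := n / k) (by omega) hkL
      rwa [Nat.div_mul_cancel (Nat.dvd_of_mod_eq_zero hr0)] at hd
    · have hs1 : 1 ≤ s := by omega
      have h2 : n = k * (n % k + s) + n % k := by rw [← hs]; exact hnd
      have he : n = s * k + (n % k) * (k + 1) := h2.trans (by ring)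
      exact he ▸ hadd _ (loopLengths_mul hs1 hkL) _ (loopLengths_mul hrpos hk1L)
  -- Step 4: conclude chain mixing
  obtain ⟨m, hm1, hmchain⟩ := ht D' hD'mem x y
  refine ⟨k * k + m, by omega, ?_⟩
  intro n hn
  have hloop : n - m ∈ L := hlarge _ (by omega)
  have := chainFrom_trans hloop.2 hmchain
  rw [Nat.sub_add_cancel (by omega)] at this
  exact chainFrom_mono hD'sub this
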